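/- The function r(t) = (2Gm((9/4)(t-α)² + Δ))^{1/3}, with G, m, Δ > 0, satisfies the ODE ṙ² = r²·(2Gm/r³)·(1 - Δ·(2Gm/r³)) for all t. -/

import Mathlib

open Real

theorem effective_ltb_ode
    (G m Δ α : ℝ) (hG : 0 < G) (hm : 0 < m) (hΔ : 0 < Δ)
    (r : ℝ → ℝ)
    (hr : ∀ t, r t = (2 * G * m * ((9 / 4) * (t - α) ^ 2 + Δ)) ^ ((1 : ℝ) / 3)) :
    ∀ t, (deriv r t) ^ 2 =
      (r t) ^ 2 * (2 * G * m / (r t) ^ 3) * (1 - Δ * (2 * G * m / (r t) ^ 3)) := by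
  intro t
  have hu : (0:ℝ) < 2 * G * m * ((9 / 4) * (t - α) ^ 2 + Δ) := by positivity
  set u : ℝ := 2 * G * m * ((9 / 4) * (t - α) ^ 2 + Δ) with hudef
  have hderiv : HasDerivAt r
      ((2 * G * m * ((9 / 2) * (t - α))) * ((1:ℝ)/3) * u ^ ((1:ℝ)/3 - 1)) t := by
    have h1 : HasDerivAt (fun t : ℝ => 2 * G * m * ((9 / 4) * (t - α) ^ 2 + Δ))
        (2 * G * m * ((9 / 2) * (t - α))) t := by
      have h := ((((hasDerivAt_id t).sub_const α).pow 2).const_mul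
        (9/4:ℝ)).add_const Δ
      have h' := h.const_mul (2 * G * m)
      refine h'.congr_deriv ?_
      simp only [id_eq]
      ring
    have h2 := h1.rpow_const (p := (1:ℝ)/3) (Or.inl (ne_of_gt hu))
    have hre : r = fun t => (2 * G * m * ((9 / 4) * (t - α) ^ 2 + Δ)) ^ ((1:ℝ)/3) :=
      funext hr
    rw [hre]
    exact h2
  rw [hderiv.deriv, hr t, ← hudef]
  have h3 : (u ^ ((1:ℝ)/3)) ^ 3 = u := by
    rw [← Real.rpow_natCast (u ^ ((1:ℝ)/3)) 3, ← Real.rpow_mul hu.le]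
    norm_num
  have h2' : (u ^ ((1:ℝ)/3)) ^ 2 = u ^ ((2:ℝ)/3) := by
    rw [← Real.rpow_natCast (u ^ ((1:ℝ)/3)) 2, ← Real.rpow_mul hu.le]
    norm_num
  have h4 : (u ^ ((1:ℝ)/3 - 1)) ^ 2 = u ^ ((2:ℝ)/3) / u ^ 2 := by
    rw [← Real.rpow_natCast (u ^ ((1:ℝ)/3 - 1)) 2, ← Real.rpow_mul hu.le,
      ← Real.rpow_natCast u 2, ← Real.rpow_sub hu]
    norm_num
  rw [mul_pow, mul_pow, h3, h2', h4]
  have hu23 : (0:ℝ) < u ^ ((2:ℝ)/3) := Real.rpow_pos_of_pos hu _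
  field_simp
  rw [hudef]
  ring
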